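/- Let F_y(θ) = ⟨θ,y⟩ + Σ_{y'∈𝒩(y)} f_y(θ; y'), where f_y(θ; y') = g_{y'}(⟨θ, y'−y⟩) with g_{y'} as above. Then F_y is convex and differentiable with ∇_θ F_y(θ) = E_{p^{(1)}_{θ,y}}[Y], the expected first iterate of the Metropolis–Hastings chain initialized at y; moreover F_y is L-smooth with L = (1/t)·Σ_{y'∈𝒩(y)} q(y,y')·‖y'−y‖², i.e. L = E_{q(y,·)}‖Y−y‖²/t. -/

import Mathlib

open Finset
open scoped RealInnerProductSpace

noncomputable def piece (t b c0 a1 a2 : ℝ) : ℝ → ℝ := fun x =>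
  if x ≤ t * Real.log (c0 / b) + a2 - a1 then
    t * b * Real.exp ((x + a1 - a2) / t)
  else
    t * c0 * ((x + a1 - a2) / t + 1 - Real.log (c0 / b))

lemma piece_hasDerivAt (t b c0 a1 a2 : ℝ) (ht : 0 < t) (hb : 0 < b) (hc : 0 < c0)
    (x : ℝ) :
    HasDerivAt (piece t b c0 a1 a2) (min c0 (b * Real.exp ((x + a1 - a2) / t))) x := by
  set c : ℝ := t * Real.log (c0 / b) + a2 - a1 with hcdef
  have hu : ∀ z : ℝ, HasDerivAt (fun z : ℝ => (z + a1 - a2) / t) (1 / t) z := by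
    intro z
    simpa using (((hasDerivAt_id z).add_const a1).sub_const a2).div_const t
  have hE : ∀ z : ℝ, HasDerivAt (fun z => t * b * Real.exp ((z + a1 - a2) / t))
      (b * Real.exp ((z + a1 - a2) / t)) z := by
    intro z
    have h1 := ((Real.hasDerivAt_exp ((z + a1 - a2) / t)).comp z (hu z)).const_mul (t * b)
    convert h1 using 1
    all_goals try rfl
    field_simp [ht.ne']
  have hL : ∀ z : ℝ, HasDerivAt
      (fun z => t * c0 * ((z + a1 - a2) / t + 1 - Real.log (c0 / b))) c0 z := by
    intro z
    have h1 := (((hu z).add_const 1).sub_const (Real.log (c0 / b))).const_mul (t * c0)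
    convert h1 using 1
    all_goals try rfl
    field_simp [ht.ne']
  have hrpos : 0 < c0 / b := div_pos hc hb
  rcases lt_trichotomy x c with hx | hx | hx
  · -- x < c : exponential branch
    have hmin : min c0 (b * Real.exp ((x + a1 - a2) / t)) = b * Real.exp ((x + a1 - a2) / t) := by
      apply min_eq_right
      have hlt : (x + a1 - a2) / t < Real.log (c0 / b) := by
        rw [div_lt_iff₀ ht]; rw [hcdef] at hx; linarith [hx]
      have h2 := Real.exp_lt_exp.2 hlt
      rw [Real.exp_log hrpos] at h2
      have h3 := (lt_div_iff₀ hb).1 h2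
      linarith [mul_comm (Real.exp ((x + a1 - a2) / t)) b]
    rw [hmin]
    apply (hE x).congr_of_eventuallyEq
    filter_upwards [Iio_mem_nhds hx] with z hz
    have hzc : z ≤ t * Real.log (c0 / b) + a2 - a1 := hcdef ▸ (Set.mem_Iio.1 hz).le
    simp only [piece, if_pos hzc]
  · -- x = c : the kink
    have hexp : b * Real.exp ((x + a1 - a2) / t) = c0 := by
      have : (x + a1 - a2) / t = Real.log (c0 / b) := by
        rw [hx, hcdef]; field_simp; ring
      rw [this, Real.exp_log hrpos]; field_simp
    have hmin : min c0 (b * Real.exp ((x + a1 - a2) / t)) = c0 := by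
      rw [hexp, min_self]
    rw [hmin]
    have hE' : HasDerivAt (fun z => t * b * Real.exp ((z + a1 - a2) / t)) c0 x := by
      rw [← hexp]; exact hE x
    rw [hasDerivAt_iff_isLittleO]
    have hEo := hasDerivAt_iff_isLittleO.1 hE'
    have hxc : x ≤ t * Real.log (c0 / b) + a2 - a1 := hcdef ▸ hx.le
    have hpx : piece t b c0 a1 a2 x = t * b * Real.exp ((x + a1 - a2) / t) := by
      simp only [piece, if_pos hxc]
    refine (Asymptotics.isBigO_of_le _ ?_).trans_isLittleO hEo
    intro z
    by_cases hz : z ≤ t * Real.log (c0 / b) + a2 - a1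
    · simp only [piece, if_pos hz, if_pos hxc]
      exact le_rfl
    · have hpz : piece t b c0 a1 a2 z =
          t * c0 * ((z + a1 - a2) / t + 1 - Real.log (c0 / b)) := by
        simp only [piece, if_neg hz]
      have hEx : t * b * Real.exp ((x + a1 - a2) / t) = t * c0 := by
        rw [mul_assoc, hexp]
      have hzero : piece t b c0 a1 a2 z - piece t b c0 a1 a2 x - (z - x) • c0 = 0 := by
        rw [hpz, hpx, hEx, smul_eq_mul, hx, hcdef]
        field_simp
        ring
      rw [hzero]
      simp [norm_nonneg]
  · -- x > c : linear branch
    have hmin : min c0 (b * Real.exp ((x + a1 - a2) / t)) = c0 := by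
      apply min_eq_left
      have hlt : Real.log (c0 / b) < (x + a1 - a2) / t := by
        rw [lt_div_iff₀ ht]; rw [hcdef] at hx; linarith [hx]
      have h2 := Real.exp_lt_exp.2 hlt
      rw [Real.exp_log hrpos] at h2
      have h3 := (div_lt_iff₀ hb).1 h2
      linarith [mul_comm (Real.exp ((x + a1 - a2) / t)) b]
    rw [hmin]
    apply (hL x).congr_of_eventuallyEq
    filter_upwards [Ioi_mem_nhds hx] with z hz
    have hzc : ¬ z ≤ t * Real.log (c0 / b) + a2 - a1 :=
      not_le.2 (hcdef ▸ (Set.mem_Ioi.1 hz))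
    simp only [piece, if_neg hzc]

lemma min_exp_monotone (t b c0 a1 a2 : ℝ) (ht : 0 < t) (hb : 0 < b) :
    Monotone fun x : ℝ => min c0 (b * Real.exp ((x + a1 - a2) / t)) := by
  apply monotone_const.min
  intro u v huv
  have hle : (u + a1 - a2) / t ≤ (v + a1 - a2) / t := by gcongr
  exact mul_le_mul_of_nonneg_left (Real.exp_le_exp.2 hle) hb.le

lemma min_exp_lipschitz (b c0 : ℝ) (hb : 0 < b) (hc : 0 < c0) (u v : ℝ) :
    |min c0 (b * Real.exp v) - min c0 (b * Real.exp u)| ≤ c0 * |v - u| := by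
  have key : ∀ u v : ℝ, u ≤ v →
      min c0 (b * Real.exp v) - min c0 (b * Real.exp u) ≤ c0 * (v - u) := by
    intro u v huv
    have hexp : Real.exp u ≤ Real.exp v := Real.exp_le_exp.2 huv
    have hdiff : ∀ u v : ℝ, u ≤ v → b * Real.exp v - b * Real.exp u ≤ b * Real.exp v * (v - u) := by
      intro u v huv
      have h1 := Real.add_one_le_exp (u - v)
      have h2 : Real.exp u = Real.exp (u - v) * Real.exp v := by
        rw [← Real.exp_add]; ring_nf
      nlinarith [mul_le_mul_of_nonneg_left h1 (mul_pos hb (Real.exp_pos v)).le, h2,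
        Real.exp_pos v, hb.le]
    by_cases h1 : c0 ≤ b * Real.exp u
    · have h2 : c0 ≤ b * Real.exp v :=
        le_trans h1 (mul_le_mul_of_nonneg_left hexp hb.le)
      rw [min_eq_left h1, min_eq_left h2]
      nlinarith
    · push_neg at h1
      by_cases h2 : b * Real.exp v ≤ c0
      · rw [min_eq_right h2, min_eq_right h1.le]
        have := hdiff u v huv
        nlinarith
      · push_neg at h2
        rw [min_eq_left h2.le, min_eq_right h1.le]
        set w := Real.log (c0 / b) with hw
        have hbw : b * Real.exp w = c0 := by
          rw [hw, Real.exp_log (div_pos hc hb)]; field_simp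
        have huw : u ≤ w := by
          by_contra h
          push_neg at h
          have := Real.exp_lt_exp.2 h
          nlinarith
        have hwv : w ≤ v := by
          by_contra h
          push_neg at h
          have := Real.exp_lt_exp.2 h
          nlinarith
        have := hdiff u w huw
        rw [hbw] at this
        nlinarith
  have hmono : ∀ u v : ℝ, u ≤ v →
      min c0 (b * Real.exp u) ≤ min c0 (b * Real.exp v) := by
    intro u v huv
    exact min_le_min le_rfl (by nlinarith [Real.exp_le_exp.2 huv])
  rcases le_total u v with h | h
  · rw [abs_of_nonneg (by linarith [hmono u v h]), abs_of_nonneg (by linarith)]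
    exact key u v h
  · rw [abs_of_nonpos (by linarith [hmono v u h]), abs_of_nonpos (by linarith)]
    linarith [key v u h]


lemma piece_convexOn (t b c0 a1 a2 : ℝ) (ht : 0 < t) (hb : 0 < b) (hc : 0 < c0) :
    ConvexOn ℝ Set.univ (piece t b c0 a1 a2) := by
  have hdiff : Differentiable ℝ (piece t b c0 a1 a2) := fun x =>
    (piece_hasDerivAt t b c0 a1 a2 ht hb hc x).differentiableAt
  apply Monotone.convexOn_univ_of_deriv hdiff
  have hderiv : deriv (piece t b c0 a1 a2) =
      fun x => min c0 (b * Real.exp ((x + a1 - a2) / t)) :=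
    funext fun x => (piece_hasDerivAt t b c0 a1 a2 ht hb hc x).deriv
  rw [hderiv]
  exact min_exp_monotone t b c0 a1 a2 ht hb

lemma convexOn_finset_sum {ι E : Type*} [AddCommGroup E] [Module ℝ E]
    (s : Finset ι) (f : ι → E → ℝ)
    (h : ∀ i ∈ s, ConvexOn ℝ Set.univ (f i)) :
    ConvexOn ℝ Set.univ (fun x => ∑ i ∈ s, f i x) := by
  classical
  induction s using Finset.induction_on with
  | empty => simpa using convexOn_const (0 : ℝ) convex_univ
  | @insert a s ha ih =>
      simp only [Finset.sum_insert ha]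
      exact (h _ (Finset.mem_insert_self _ _)).add
        (ih fun i hi => h i (Finset.mem_insert_of_mem hi))

/-- The one-step potential `F_y` is convex, differentiable with gradient equal
to the expected first Metropolis–Hastings iterate, and
`E_{q(y,·)}‖Y−y‖²/t`-smooth. -/
theorem one_step_potential_gradient_smooth {d : ℕ}
    (y : EuclideanSpace ℝ (Fin d)) (N : Finset (EuclideanSpace ℝ (Fin d)))
    (hy : y ∉ N)
    (φ : EuclideanSpace ℝ (Fin d) → ℝ) (t : ℝ) (ht : 0 < t)
    (q : EuclideanSpace ℝ (Fin d) → EuclideanSpace ℝ (Fin d) → ℝ)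
    (hq_pos : ∀ y' ∈ N, 0 < q y y' ∧ 0 < q y' y)
    (g : EuclideanSpace ℝ (Fin d) → ℝ → ℝ)
    (hg : ∀ y' ∈ N, ∀ x : ℝ, g y' x =
      if x ≤ t * Real.log (q y y' / q y' y) + φ y - φ y' then
        t * q y' y * Real.exp ((x + φ y' - φ y) / t)
      else
        t * q y y' * ((x + φ y' - φ y) / t + 1 - Real.log (q y y' / q y' y)))
    (F : EuclideanSpace ℝ (Fin d) → ℝ)
    (hF : ∀ θ, F θ = ⟪θ, y⟫ + ∑ y' ∈ N, g y' ⟪θ, y' - y⟫)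
    (p1 : EuclideanSpace ℝ (Fin d) → EuclideanSpace ℝ (Fin d) → ℝ)
    (hp1 : ∀ θ, ∀ y' ∈ N, p1 θ y' =
      q y y' * min 1 ((q y' y / q y y') *
        Real.exp ((⟪θ, y' - y⟫ + φ y' - φ y) / t)))
    (m : EuclideanSpace ℝ (Fin d) → EuclideanSpace ℝ (Fin d))
    (hm : ∀ θ, m θ = y + ∑ y' ∈ N, p1 θ y' • (y' - y)) :
    ConvexOn ℝ Set.univ F ∧
    (∀ θ, HasGradientAt F (m θ) θ) ∧
    (∀ θ₁ θ₂, ‖m θ₁ - m θ₂‖ ≤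
      ((1 / t) * ∑ y' ∈ N, q y y' * ‖y' - y‖ ^ 2) * ‖θ₁ - θ₂‖) := by
  classical
  have hb : ∀ y' ∈ N, 0 < q y' y := fun y' h => (hq_pos y' h).2
  have hc : ∀ y' ∈ N, 0 < q y y' := fun y' h => (hq_pos y' h).1
  have hgp : ∀ y' ∈ N, g y' = piece t (q y' y) (q y y') (φ y') (φ y) := by
    intro y' hy'; funext x; rw [hg y' hy' x]; rfl
  have hp1' : ∀ θ, ∀ y' ∈ N, p1 θ y' =
      min (q y y') (q y' y * Real.exp ((⟪θ, y' - y⟫ + φ y' - φ y) / t)) := by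
    intro θ y' hy'
    have h0 : q y y' ≠ 0 := (hc y' hy').ne'
    rw [hp1 θ y' hy', mul_min_of_nonneg _ _ (hc y' hy').le, mul_one]
    congr 1
    field_simp
  have hFeq : F = fun θ => ⟪θ, y⟫ + ∑ y' ∈ N, g y' ⟪θ, y' - y⟫ := funext hF
  have hIn : ∀ (v θ : EuclideanSpace ℝ (Fin d)),
      HasFDerivAt (fun w : EuclideanSpace ℝ (Fin d) => (⟪w, v⟫ : ℝ))
        (InnerProductSpace.toDual ℝ (EuclideanSpace ℝ (Fin d)) v :
          EuclideanSpace ℝ (Fin d) →L[ℝ] ℝ) θ := by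
    intro v θ
    have h1 : (fun w : EuclideanSpace ℝ (Fin d) => (⟪w, v⟫ : ℝ))
        = fun w => (InnerProductSpace.toDual ℝ (EuclideanSpace ℝ (Fin d)) v) w := by
      funext w
      rw [InnerProductSpace.toDual_apply_apply, real_inner_comm]
    rw [h1]
    exact (InnerProductSpace.toDual ℝ (EuclideanSpace ℝ (Fin d)) v :
      EuclideanSpace ℝ (Fin d) →L[ℝ] ℝ).hasFDerivAt
  have hterm : ∀ (θ : EuclideanSpace ℝ (Fin d)), ∀ y' ∈ N,
      HasFDerivAt (fun w : EuclideanSpace ℝ (Fin d) => g y' ⟪w, y' - y⟫)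
        (p1 θ y' • (InnerProductSpace.toDual ℝ (EuclideanSpace ℝ (Fin d)) (y' - y) :
          EuclideanSpace ℝ (Fin d) →L[ℝ] ℝ)) θ := by
    intro θ y' hy'
    rw [hp1' θ y' hy', hgp y' hy']
    have hd := piece_hasDerivAt t (q y' y) (q y y') (φ y') (φ y) ht (hb y' hy')
      (hc y' hy') (⟪θ, y' - y⟫ : ℝ)
    exact hd.comp_hasFDerivAt θ (hIn (y' - y) θ)
  -- gradient
  have hgrad : ∀ θ, HasGradientAt F (m θ) θ := by
    intro θ
    rw [hasGradientAt_iff_hasFDerivAt]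
    have hsum := HasFDerivAt.fun_sum (u := N) (fun y' hy' => hterm θ y' hy')
    have hAll := (hIn y θ).add hsum
    rw [hFeq]
    convert hAll using 1
    all_goals try rfl
    rw [hm θ, map_add, map_sum]
    simp only [map_smul]
  -- convexity
  have hconv : ConvexOn ℝ Set.univ F := by
    rw [hFeq]
    apply ConvexOn.add
    · have h1 : (fun θ : EuclideanSpace ℝ (Fin d) => (⟪θ, y⟫ : ℝ))
          = fun θ => ((InnerProductSpace.toDual ℝ (EuclideanSpace ℝ (Fin d)) y :
            EuclideanSpace ℝ (Fin d) →L[ℝ] ℝ).toLinearMap) θ := by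
        funext w
        simp only [ContinuousLinearMap.coe_coe, LinearMap.coe_toContinuousLinearMap',
          InnerProductSpace.toDual_apply_apply]
        · exact real_inner_comm y w
      rw [h1]
      exact LinearMap.convexOn _ convex_univ
    · apply convexOn_finset_sum
      intro y' hy'
      have hpc := piece_convexOn t (q y' y) (q y y') (φ y') (φ y) ht (hb y' hy')
        (hc y' hy')
      have haff := hpc.comp_affineMap
        ((InnerProductSpace.toDual ℝ (EuclideanSpace ℝ (Fin d)) (y' - y) :
          EuclideanSpace ℝ (Fin d) →L[ℝ] ℝ).toLinearMap.toAffineMap)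
      have h2 : (fun θ : EuclideanSpace ℝ (Fin d) => g y' ⟪θ, y' - y⟫)
          = (piece t (q y' y) (q y y') (φ y') (φ y)) ∘
            ((InnerProductSpace.toDual ℝ (EuclideanSpace ℝ (Fin d)) (y' - y) :
              EuclideanSpace ℝ (Fin d) →L[ℝ] ℝ).toLinearMap.toAffineMap) := by
        funext w
        simp only [Function.comp_apply, LinearMap.coe_toAffineMap,
          ContinuousLinearMap.coe_coe, InnerProductSpace.toDual_apply_apply, hgp y' hy']
        rw [real_inner_comm]
      rw [h2]
      simpa using haff
  -- Lipschitz bound on the gradient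
  refine ⟨hconv, hgrad, ?_⟩
  intro θ₁ θ₂
  have hlip : ∀ y' ∈ N, |p1 θ₁ y' - p1 θ₂ y'| ≤
      (q y y' / t) * (‖θ₁ - θ₂‖ * ‖y' - y‖) := by
    intro y' hy'
    rw [hp1' θ₁ y' hy', hp1' θ₂ y' hy']
    have h1 := min_exp_lipschitz (q y' y) (q y y') (hb y' hy') (hc y' hy')
      ((⟪θ₂, y' - y⟫ + φ y' - φ y) / t) ((⟪θ₁, y' - y⟫ + φ y' - φ y) / t)
    have h2 : (⟪θ₁, y' - y⟫ + φ y' - φ y) / t - (⟪θ₂, y' - y⟫ + φ y' - φ y) / t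
        = (⟪θ₁ - θ₂, y' - y⟫ : ℝ) / t := by
      rw [inner_sub_left]; ring
    rw [h2] at h1
    have h3 : |(⟪θ₁ - θ₂, y' - y⟫ : ℝ) / t| ≤ ‖θ₁ - θ₂‖ * ‖y' - y‖ / t := by
      rw [abs_div, abs_of_pos ht]
      gcongr
      exact abs_real_inner_le_norm _ _
    refine h1.trans (le_trans (mul_le_mul_of_nonneg_left h3 (hc y' hy').le)
      (le_of_eq (by ring)))
  have h4 : (∑ y' ∈ N, (p1 θ₁ y' - p1 θ₂ y') • (y' - y)) =
      (∑ y' ∈ N, p1 θ₁ y' • (y' - y)) - ∑ y' ∈ N, p1 θ₂ y' • (y' - y) := by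
    rw [← Finset.sum_sub_distrib]
    exact Finset.sum_congr rfl fun y' _ => sub_smul _ _ _
  have hdiffm : m θ₁ - m θ₂ = ∑ y' ∈ N, (p1 θ₁ y' - p1 θ₂ y') • (y' - y) := by
    rw [hm θ₁, hm θ₂, h4]
    abel
  rw [hdiffm]
  refine le_trans (norm_sum_le _ _) ?_
  have hstep : ∀ y' ∈ N, ‖(p1 θ₁ y' - p1 θ₂ y') • (y' - y)‖ ≤
      (1 / t) * (q y y' * ‖y' - y‖ ^ 2) * ‖θ₁ - θ₂‖ := by
    intro y' hy'
    rw [norm_smul, Real.norm_eq_abs]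
    refine le_trans (mul_le_mul_of_nonneg_right (hlip y' hy') (norm_nonneg _))
      (le_of_eq ?_)
    ring
  refine le_trans (Finset.sum_le_sum hstep) (le_of_eq ?_)
  rw [Finset.mul_sum, Finset.sum_mul]
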